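/- Let a, b ∈ ℝ with |a − b| ≤ (Λ − d)/ϑ − u, and let r_a ∈ [a + d − u, a + d] and r_b ∈ [b + d − u, b + d] be reception times. Then for any hardware clock H: a − b − κ ≤ (H(r_a) − H(r_b)) − κ/2 ≤ a − b. (In the paper, a is the pulse time t_{v,ℓ−1} of a node's own predecessor and b is the maximum, respectively minimum, pulse time t_max, t_min over its neighbours on layer ℓ−1, so that H(r_a) − H(r_b) is the difference H_own − H_max, respectively H_own − H_min, of local reception times.) -/

import Mathlib

/-- accuracy of local skew estimates via reception times. -/
theorem stmt1
    (ϑ u d Λ κ : ℝ)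
    (hϑ : 1 < ϑ) (hu : 0 ≤ u) (hd : u ≤ d) (hΛ : d < Λ)
    (hκ : κ = 2 * (u + (1 - 1/ϑ) * (Λ - d)))
    (H : ℝ → ℝ)
    (hH : ∀ t t' : ℝ, t ≤ t' → t' - t ≤ H t' - H t ∧ H t' - H t ≤ ϑ * (t' - t))
    (a b ra rb : ℝ)
    (hab : |a - b| ≤ (Λ - d)/ϑ - u)
    (hra : a + d - u ≤ ra ∧ ra ≤ a + d)
    (hrb : b + d - u ≤ rb ∧ rb ≤ b + d) :
    a - b - κ ≤ (H ra - H rb) - κ/2 ∧ (H ra - H rb) - κ/2 ≤ a - b := by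
  have hϑ0 : (0:ℝ) < ϑ := by linarith
  obtain ⟨hab1, hab2⟩ := abs_le.mp hab
  have hdiv : (Λ - d)/ϑ * ϑ = Λ - d := div_mul_cancel₀ _ (ne_of_gt hϑ0)
  have hkappa : κ/2 * ϑ = u * ϑ + (ϑ - 1) * (Λ - d) := by
    rw [hκ]; field_simp
  have hab1' : -(Λ - d) + u * ϑ ≤ (a - b) * ϑ := by
    have := mul_le_mul_of_nonneg_right hab1 hϑ0.le
    nlinarith [this, hdiv]
  have hab2' : (a - b) * ϑ ≤ (Λ - d) - u * ϑ := by
    have := mul_le_mul_of_nonneg_right hab2 hϑ0.le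
    nlinarith [this, hdiv]
  have h1ϑ : 1/ϑ ≤ 1 := by rw [div_le_one hϑ0]; linarith
  have hκu : u ≤ κ/2 := by
    rw [hκ]
    nlinarith [mul_nonneg (by linarith : (0:ℝ) ≤ 1 - 1/ϑ) (by linarith : (0:ℝ) ≤ Λ - d)]
  rcases le_total ra rb with h | h
  · obtain ⟨hl, hr⟩ := hH ra rb h
    have hba : rb - ra ≤ (b - a) + u := by linarith [hra.1, hrb.2]
    have hbaϑ : ϑ * (rb - ra) ≤ ϑ * ((b - a) + u) :=
      mul_le_mul_of_nonneg_left hba hϑ0.le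
    constructor
    · nlinarith [hr, hbaϑ, hab1', hkappa]
    · linarith [hl, hra.2, hrb.1, hκu]
  · obtain ⟨hl, hr⟩ := hH rb ra h
    have hba : ra - rb ≤ (a - b) + u := by linarith [hra.2, hrb.1]
    have hbaϑ : ϑ * (ra - rb) ≤ ϑ * ((a - b) + u) :=
      mul_le_mul_of_nonneg_left hba hϑ0.le
    constructor
    · linarith [hl, hra.1, hrb.2, hκu]
    · nlinarith [hr, hbaϑ, hab2', hkappa]
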